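/- Let z ∈ ℂ with Re(z) ≥ 0 and z ≠ 0, and let m ∈ ℤ_{≥0}. Then B(z, m + 1/2) = Σ_{ℓ=0}^∞ E_ℓ B(z + ℓ, m + 1), where E_ℓ = (2ℓ)!/(4^ℓ (ℓ!)²), and the series converges absolutely. -/

import Mathlib

open Complex

/-- The Beta function `B(z,w) = Γ(z)Γ(w)/Γ(z+w)`. -/
noncomputable def complexBeta (z w : ℂ) : ℂ :=
  Complex.Gamma z * Complex.Gamma w / Complex.Gamma (z + w)

/-- Coefficients of the power series expansion `(1-x)^{-1/2} = Σ_ℓ E_ℓ x^ℓ`. -/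
noncomputable def Ecoeff (ℓ : ℕ) : ℝ :=
  (Nat.factorial (2 * ℓ) : ℝ) / (4 ^ ℓ * (Nat.factorial ℓ : ℝ) ^ 2)

open MeasureTheory Set Filter

lemma Ecoeff_zero : Ecoeff 0 = 1 := by simp [Ecoeff]

lemma Ecoeff_pos (ℓ : ℕ) : 0 < Ecoeff ℓ := by
  unfold Ecoeff
  positivity

lemma Ecoeff_succ (ℓ : ℕ) : Ecoeff (ℓ+1) = Ecoeff ℓ * ((2*ℓ+1)/(2*ℓ+2)) := by
  unfold Ecoeff
  have e1 : Nat.factorial (2*(ℓ+1)) = (2*ℓ+2)*((2*ℓ+1)*Nat.factorial (2*ℓ)) := by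
    have h2 : 2*(ℓ+1) = (2*ℓ+1)+1 := by ring
    rw [h2, Nat.factorial_succ, Nat.factorial_succ]
  have e2 : Nat.factorial (ℓ+1) = (ℓ+1)*Nat.factorial ℓ := Nat.factorial_succ ℓ
  rw [e1, e2]
  have f1 : (Nat.factorial ℓ : ℝ) ≠ 0 := Nat.cast_ne_zero.2 (Nat.factorial_ne_zero ℓ)
  have f2 : (4:ℝ)^ℓ ≠ 0 := by positivity
  push_cast
  field_simp
  ring

lemma Ecoeff_le_one (ℓ : ℕ) : Ecoeff ℓ ≤ 1 := by
  induction ℓ with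
  | zero => simp [Ecoeff_zero]
  | succ n ih =>
    rw [Ecoeff_succ]
    have h1 : (2*(n:ℝ)+1)/(2*n+2) ≤ 1 := by
      rw [div_le_one (by positivity)]; linarith
    calc Ecoeff n * ((2*n+1)/(2*n+2)) ≤ 1 * 1 := by
          apply mul_le_mul ih h1 (by positivity) zero_le_one
      _ = 1 := one_mul 1

lemma Ecoeff_sq_le (ℓ : ℕ) : Ecoeff ℓ ^ 2 ≤ 1 / (2*ℓ+1) := by
  induction ℓ with
  | zero => simp [Ecoeff_zero]
  | succ n ih =>
    rw [Ecoeff_succ, mul_pow]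
    have hd : (0:ℝ) < 2*n+2 := by positivity
    have key : ((2*(n:ℝ)+1)/(2*n+2))^2 * (1/(2*n+1)) ≤ 1/(2*(n+1)+1) := by
      rw [div_pow, div_mul_div_comm, div_le_div_iff₀ (by positivity) (by positivity)]
      nlinarith [sq_nonneg ((n:ℝ))]
    calc Ecoeff n ^2 * ((2*(n:ℝ)+1)/(2*n+2))^2
        ≤ (1/(2*n+1)) * ((2*(n:ℝ)+1)/(2*n+2))^2 := by
          apply mul_le_mul_of_nonneg_right ih (by positivity)
      _ = ((2*(n:ℝ)+1)/(2*n+2))^2 * (1/(2*n+1)) := by ring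
      _ ≤ 1/(2*((n:ℝ)+1)+1) := key
      _ = 1/(2*((n+1:ℕ):ℝ)+1) := by push_cast; ring
    
lemma Ecoeff_le_inv_sqrt (ℓ : ℕ) (hℓ : 1 ≤ ℓ) : Ecoeff ℓ ≤ (Real.sqrt ℓ)⁻¹ := by
  have h1 : Ecoeff ℓ ^ 2 ≤ 1/(ℓ:ℝ) := by
    refine (Ecoeff_sq_le ℓ).trans ?_
    apply one_div_le_one_div_of_le (by exact_mod_cast hℓ)
    push_cast; linarith [Nat.cast_nonneg (α := ℝ) ℓ]
  have h2 := Real.sqrt_le_sqrt h1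
  rwa [Real.sqrt_sq (Ecoeff_pos ℓ).le, one_div, Real.sqrt_inv] at h2

-- continuity helper
lemma cont_div_sqrt {x : ℝ} (h1 : x < 1) (g : ℝ → ℝ) (hg : Continuous g) :
    ContinuousOn (fun t => g t / Real.sqrt (1-t)) (Set.uIcc 0 x) := by
  apply ContinuousOn.div hg.continuousOn
    ((continuous_const.sub continuous_id).sqrt.continuousOn)
  intro t ht
  have ht' : t < 1 := by
    rcases Set.mem_uIcc.1 ht with h | h
    · exact lt_of_le_of_lt h.2 h1
    · linarith [h.2]
  simp only [Pi.sub_apply, id_eq]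
  rw [Real.sqrt_ne_zero']
  linarith

lemma sqrt_one_sub_pos {x t : ℝ} (h1 : x < 1) (ht : t ∈ Set.uIcc 0 x) :
    0 < 1 - t := by
  rcases Set.mem_uIcc.1 ht with h | h
  · linarith [h.2]
  · linarith [h.2]

-- FTC base
lemma ftc_base {x : ℝ} (h1 : x < 1) :
    ∫ t in (0:ℝ)..x, (1/2) / Real.sqrt (1-t) = 1 - Real.sqrt (1-x) := by
  have := intervalIntegral.integral_eq_sub_of_hasDerivAt
    (f := fun t : ℝ => -Real.sqrt (1-t))
    (f' := fun t : ℝ => (1/2) / Real.sqrt (1-t)) (a := (0:ℝ)) (b := x) ?_ ?_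
  · rw [this]; simp only [sub_zero, Real.sqrt_one]; ring
  · intro t ht
    have hpos := sqrt_one_sub_pos h1 ht
    have h0 : HasDerivAt (fun t : ℝ => 1 - t) (-1) t := by
      simpa using (hasDerivAt_id t).const_sub 1
    have h2 := (Real.hasDerivAt_sqrt hpos.ne').comp t h0
    have h3 := h2.neg
    convert h3 using 1
    · rfl
    field_simp
  · exact (cont_div_sqrt h1 _ continuous_const).intervalIntegrable

-- FTC step
lemma ftc_step {x : ℝ} (h0 : 0 ≤ x) (h1 : x < 1) (L : ℕ) :
    ∫ t in (0:ℝ)..x, ((L+1) * t^L - (2*L+3)/2 * t^(L+1)) / Real.sqrt (1-t)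
      = Real.sqrt (1-x) * x^(L+1) := by
  have := intervalIntegral.integral_eq_sub_of_hasDerivAt
    (f := fun t : ℝ => Real.sqrt (1-t) * t^(L+1))
    (f' := fun t : ℝ => ((L+1) * t^L - (2*L+3)/2 * t^(L+1)) / Real.sqrt (1-t))
    (a := (0:ℝ)) (b := x) ?_ ?_
  · rw [this]; simp
  · intro t ht
    have hpos := sqrt_one_sub_pos h1 ht
    have hs : Real.sqrt (1-t) ≠ 0 := by rw [Real.sqrt_ne_zero']; exact hpos
    have hsq : Real.sqrt (1-t) * Real.sqrt (1-t) = 1 - t := Real.mul_self_sqrt hpos.le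
    have hd : HasDerivAt (fun t : ℝ => 1 - t) (-1) t := by
      simpa using (hasDerivAt_id t).const_sub 1
    have h2 := (Real.hasDerivAt_sqrt hpos.ne').comp t hd
    have h3 : HasDerivAt (fun t : ℝ => t^(L+1)) ((L+1) * t^L) t := by
      simpa using hasDerivAt_pow (L+1) t
    have h4 := h2.mul h3
    convert h4 using 1
    case e'_4 => rfl
    case e'_8 => rfl
    simp only [Function.comp_apply]
    rw [div_eq_iff hs]
    have hinv : Real.sqrt (1-t) * (Real.sqrt (1-t))⁻¹ = 1 := mul_inv_cancel₀ hs
    linear_combination (-((L:ℝ)+1)*t^L) * hsq + (t^(L+1)/2) * hinv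
  · exact (cont_div_sqrt h1 _ (by continuity)).intervalIntegrable

lemma partial_id {x : ℝ} (h0 : 0 ≤ x) (h1 : x < 1) (L : ℕ) :
    Real.sqrt (1-x) * ∑ ℓ ∈ Finset.range (L+1), Ecoeff ℓ * x^ℓ
      = 1 - (L+1) * Ecoeff (L+1) * ∫ t in (0:ℝ)..x, t^L / Real.sqrt (1-t) := by
  induction L with
  | zero =>
    have e1 : Ecoeff 1 = 1/2 := by
      rw [(Ecoeff_succ 0 : Ecoeff 1 = _), Ecoeff_zero]; norm_num
    have hb := ftc_base h1
    have h2 : ∫ t in (0:ℝ)..x, t^(0:ℕ) / Real.sqrt (1-t) = 2 * (1 - Real.sqrt (1-x)) := by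
      rw [← hb, ← intervalIntegral.integral_const_mul]
      congr 1; funext t; rw [pow_zero]; ring
    rw [h2, e1, Finset.sum_range_one, Ecoeff_zero, pow_zero, mul_one]
    push_cast
    ring
  | succ L ih =>
    rw [Finset.sum_range_succ, mul_add]
    rw [ih]
    have hint : ∀ M : ℕ, IntervalIntegrable (fun t => t^M / Real.sqrt (1-t)) MeasureTheory.volume 0 x :=
      fun M => (cont_div_sqrt h1 _ (by continuity)).intervalIntegrable
    -- key: E_{L+1} * sqrt(1-x) * x^(L+1) = (L+1)E_{L+1} I_L - (L+2)E_{L+2} I_{L+1}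
    have hE : ((L:ℝ)+1+1) * Ecoeff (L+1+1) = Ecoeff (L+1) * ((2*L+3)/2) := by
      rw [Ecoeff_succ (L+1)]
      push_cast
      field_simp
      ring
    have hsplit : ∫ t in (0:ℝ)..x, ((L+1) * t^L - (2*L+3)/2 * t^(L+1)) / Real.sqrt (1-t)
        = (L+1) * (∫ t in (0:ℝ)..x, t^L / Real.sqrt (1-t))
          - (2*L+3)/2 * ∫ t in (0:ℝ)..x, t^(L+1) / Real.sqrt (1-t) := by
      rw [← intervalIntegral.integral_const_mul, ← intervalIntegral.integral_const_mul,
        ← intervalIntegral.integral_sub ((hint L).const_mul _) ((hint (L+1)).const_mul _)]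
      congr 1; ext t; ring
    have hftc := ftc_step h0 h1 L
    rw [hsplit] at hftc
    push_cast
    push_cast at hE hftc
    linear_combination (-(Ecoeff (L+1))) * hftc
      + (∫ t in (0:ℝ)..x, t^(L+1)/Real.sqrt (1-t)) * hE

lemma hasSum_Ecoeff_mul {x : ℝ} (h0 : 0 ≤ x) (h1 : x < 1) :
    HasSum (fun ℓ : ℕ => Ecoeff ℓ * x^ℓ) ((Real.sqrt (1-x))⁻¹) := by
  have hxpos : 0 < 1 - x := by linarith
  have hs : 0 < Real.sqrt (1-x) := Real.sqrt_pos.2 hxpos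
  have hint : ∀ M : ℕ, IntervalIntegrable (fun t => t^M / Real.sqrt (1-t))
      MeasureTheory.volume 0 x :=
    fun M => (cont_div_sqrt h1 _ (by continuity)).intervalIntegrable
  rw [hasSum_iff_tendsto_nat_of_nonneg
    (fun ℓ => mul_nonneg (Ecoeff_pos ℓ).le (pow_nonneg h0 ℓ))]
  rw [← Filter.tendsto_add_atTop_iff_nat 1]
  -- partial sums of length L+1
  have hform : ∀ L : ℕ, ∑ ℓ ∈ Finset.range (L+1), Ecoeff ℓ * x^ℓ
      = (1 - (L+1) * Ecoeff (L+1) * ∫ t in (0:ℝ)..x, t^L / Real.sqrt (1-t))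
        * (Real.sqrt (1-x))⁻¹ := by
    intro L
    rw [← partial_id h0 h1 L]
    field_simp
  simp_rw [hform]
  have hR : Filter.Tendsto
      (fun L : ℕ => ((L:ℝ)+1) * Ecoeff (L+1) * ∫ t in (0:ℝ)..x, t^L / Real.sqrt (1-t))
      Filter.atTop (nhds 0) := by
    apply squeeze_zero (g := fun L : ℕ => ((L:ℝ)+1) * x^(L+1) * (Real.sqrt (1-x))⁻¹)
    · intro L
      have hI0 : 0 ≤ ∫ t in (0:ℝ)..x, t^L / Real.sqrt (1-t) := by
        apply intervalIntegral.integral_nonneg h0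
        intro t ht
        exact div_nonneg (pow_nonneg ht.1 _) (Real.sqrt_nonneg _)
      exact mul_nonneg (mul_nonneg (by positivity) (Ecoeff_pos _).le) hI0
    · intro L
      have hIle : (∫ t in (0:ℝ)..x, t^L / Real.sqrt (1-t))
          ≤ x^(L+1) * (Real.sqrt (1-x))⁻¹ := by
        have hmono := intervalIntegral.integral_mono_on h0 (hint L)
          (intervalIntegrable_const (c := x^L / Real.sqrt (1-x)))
          (fun t ht => by
            have h1t : 0 < 1 - t := by linarith [ht.2]
            apply div_le_div₀ (by positivity) (pow_le_pow_left₀ ht.1 ht.2 L) hs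
            exact Real.sqrt_le_sqrt (by linarith [ht.2]))
        rw [intervalIntegral.integral_const, smul_eq_mul, sub_zero] at hmono
        calc (∫ t in (0:ℝ)..x, t^L / Real.sqrt (1-t)) ≤ x * (x^L / Real.sqrt (1-x)) := hmono
          _ = x^(L+1) * (Real.sqrt (1-x))⁻¹ := by rw [pow_succ]; ring
      have hE1 : Ecoeff (L+1) ≤ 1 := Ecoeff_le_one _
      have hI0 : 0 ≤ ∫ t in (0:ℝ)..x, t^L / Real.sqrt (1-t) := by
        apply intervalIntegral.integral_nonneg h0
        intro t ht
        exact div_nonneg (pow_nonneg ht.1 _) (Real.sqrt_nonneg _)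
      calc ((L:ℝ)+1) * Ecoeff (L+1) * (∫ t in (0:ℝ)..x, t^L / Real.sqrt (1-t))
          ≤ ((L:ℝ)+1) * 1 * (x^(L+1) * (Real.sqrt (1-x))⁻¹) := by
            apply mul_le_mul (by nlinarith [(Ecoeff_pos (L+1)).le]) hIle hI0 (by positivity)
        _ = ((L:ℝ)+1) * x^(L+1) * (Real.sqrt (1-x))⁻¹ := by ring
    · have hsum : Summable (fun n : ℕ => (n:ℝ)^(1:ℕ) * x^n) := by
        apply summable_pow_mul_geometric_of_norm_lt_one
        rw [Real.norm_eq_abs, _root_.abs_of_nonneg h0]; exact h1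
      have h2 := hsum.tendsto_atTop_zero.comp (Filter.tendsto_add_atTop_nat 1)
      have h3 : Filter.Tendsto (fun L : ℕ => ((L:ℝ)+1) * x^(L+1)) Filter.atTop (nhds 0) := by
        have he : (fun L : ℕ => ((L:ℝ)+1) * x^(L+1))
            = (fun n : ℕ => (n:ℝ)^(1:ℕ) * x^n) ∘ (fun a => a+1) := by
          funext L; simp only [Function.comp_apply, pow_one]; push_cast; ring
        rw [he]; exact h2
      simpa using h3.mul_const ((Real.sqrt (1-x))⁻¹)
  have := (tendsto_const_nhds (x := (1:ℝ)).sub hR).mul_const ((Real.sqrt (1-x))⁻¹)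
  simpa using this

lemma Gamma_add_nat (u : ℂ) (n : ℕ) (h : ∀ j : ℕ, j < n → u + j ≠ 0) :
    Complex.Gamma (u + n) = Complex.Gamma u * ∏ j ∈ Finset.range n, (u + j) := by
  induction n with
  | zero => simp
  | succ n ih =>
    have hn : u + n ≠ 0 := h n (Nat.lt_succ_self n)
    have : u + (n+1 : ℕ) = (u + n) + 1 := by push_cast; ring
    rw [this, Complex.Gamma_add_one _ hn, ih (fun j hj => h j (hj.trans (Nat.lt_succ_self n))),
      Finset.prod_range_succ]
    ring

lemma complexBeta_succ_eq (u : ℂ) (m : ℕ) (hG : Complex.Gamma u ≠ 0)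
    (h : ∀ j : ℕ, j ≤ m → u + j ≠ 0) :
    complexBeta u ((m:ℂ)+1) = (Nat.factorial m : ℂ) / ∏ j ∈ Finset.range (m+1), (u + j) := by
  unfold complexBeta
  have h1 : u + ((m:ℂ)+1) = u + ((m+1 : ℕ) : ℂ) := by push_cast; ring
  rw [h1, Gamma_add_nat u (m+1) (fun j hj => h j (Nat.lt_succ_iff.1 hj)),
    Complex.Gamma_nat_eq_factorial]
  rw [mul_comm (Complex.Gamma u), mul_div_assoc,
    ← div_div, div_self hG, mul_one_div]

lemma norm_complexBeta_le {u : ℂ} {m : ℕ} {r : ℝ} (hr : 0 < r)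
    (hG : Complex.Gamma u ≠ 0) (h : ∀ j : ℕ, j ≤ m → r ≤ ‖u + j‖) :
    ‖complexBeta u ((m:ℂ)+1)‖ ≤ (Nat.factorial m : ℝ) / r^(m+1) := by
  have h0 : ∀ j : ℕ, j ≤ m → u + j ≠ 0 := fun j hj => by
    have := h j hj
    intro hc; rw [hc, norm_zero] at this; linarith
  rw [complexBeta_succ_eq u m hG h0, norm_div, norm_prod]
  have hnum : ‖(Nat.factorial m : ℂ)‖ = (Nat.factorial m : ℝ) := by
    rw [Complex.norm_natCast]
  rw [hnum]
  apply div_le_div_of_nonneg_left (Nat.cast_nonneg _) (by positivity)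
  calc r^(m+1) = ∏ _j ∈ Finset.range (m+1), r := by
        rw [Finset.prod_const, Finset.card_range]
    _ ≤ ∏ j ∈ Finset.range (m+1), ‖u + j‖ :=
        Finset.prod_le_prod (fun _ _ => hr.le)
          (fun j hj => h j (Nat.lt_succ_iff.1 (Finset.mem_range.1 hj)))

-- Gamma nonvanishing for our region
lemma Gamma_ne_zero_aux {u : ℂ} (hre : 0 ≤ u.re) (hu : u ≠ 0) : Complex.Gamma u ≠ 0 := by
  apply Complex.Gamma_ne_zero
  intro n
  cases n with
  | zero => simpa using hu
  | succ n =>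
    intro hc
    have : u.re = -(n+1 : ℕ) := by rw [hc]; simp
    simp at this
    linarith

-- term bound for ℓ ≥ 1
lemma term_bound {w : ℂ} (hw : 0 ≤ w.re) {ℓ : ℕ} (hℓ : 1 ≤ ℓ) (m : ℕ) :
    ‖(Ecoeff ℓ : ℂ) * complexBeta (w + ℓ) ((m:ℂ)+1)‖
      ≤ (Nat.factorial m : ℝ) * (((ℓ:ℝ) ^ ((3:ℝ)/2))⁻¹) := by
  have hℓR : (1:ℝ) ≤ (ℓ:ℝ) := by exact_mod_cast hℓ
  have hℓpos : (0:ℝ) < ℓ := by linarith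
  have hnorm : ∀ j : ℕ, j ≤ m → (ℓ:ℝ) ≤ ‖(w + ℓ) + j‖ := by
    intro j hj
    calc (ℓ:ℝ) ≤ ((w + ℓ) + j).re := by
          simp only [Complex.add_re, Complex.natCast_re]
          linarith [Nat.cast_nonneg (α := ℝ) j]
      _ ≤ |((w + ℓ) + j).re| := le_abs_self _
      _ ≤ ‖(w + ℓ) + j‖ := Complex.abs_re_le_norm _
  have hG : Complex.Gamma (w + ℓ) ≠ 0 := by
    apply Gamma_ne_zero_aux
    · simp only [Complex.add_re, Complex.natCast_re]; linarith
    · intro hc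
      have : (w + (ℓ:ℂ)).re = 0 := by rw [hc]; simp
      simp only [Complex.add_re, Complex.natCast_re] at this
      linarith
  have hB := norm_complexBeta_le hℓpos hG hnorm
  rw [norm_mul]
  have hE : ‖(Ecoeff ℓ : ℂ)‖ ≤ (Real.sqrt ℓ)⁻¹ := by
    rw [Complex.norm_real, Real.norm_eq_abs, _root_.abs_of_nonneg (Ecoeff_pos ℓ).le]
    exact Ecoeff_le_inv_sqrt ℓ hℓ
  have hpow : (ℓ:ℝ)^(m+1) ≥ (ℓ:ℝ) := by
    calc (ℓ:ℝ)^(m+1) ≥ (ℓ:ℝ)^1 := pow_le_pow_right₀ hℓR (by omega)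
      _ = (ℓ:ℝ) := pow_one _
  have hB2 : ‖complexBeta (w + ℓ) ((m:ℂ)+1)‖ ≤ (Nat.factorial m : ℝ) / ℓ := by
    refine hB.trans ?_
    apply div_le_div_of_nonneg_left (Nat.cast_nonneg _) hℓpos hpow
  calc ‖(Ecoeff ℓ : ℂ)‖ * ‖complexBeta (w + ℓ) ((m:ℂ)+1)‖
      ≤ (Real.sqrt ℓ)⁻¹ * ((Nat.factorial m : ℝ) / ℓ) := by
        apply mul_le_mul hE hB2 (norm_nonneg _) (by positivity)
    _ = (Nat.factorial m : ℝ) * (((ℓ:ℝ) * Real.sqrt ℓ)⁻¹) := by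
        rw [mul_inv]; ring
    _ = (Nat.factorial m : ℝ) * (((ℓ:ℝ) ^ ((3:ℝ)/2))⁻¹) := by
        congr 2
        rw [show (3:ℝ)/2 = 1 + 1/2 by norm_num, Real.rpow_add hℓpos, Real.rpow_one,
          ← Real.sqrt_eq_rpow]

lemma complexBeta_eq_betaIntegral {u v : ℂ} (hu : 0 < u.re) (hv : 0 < v.re) :
    complexBeta u v = Complex.betaIntegral u v := by
  unfold complexBeta
  rw [Complex.Gamma_mul_Gamma_eq_betaIntegral hu hv]
  have hne : Complex.Gamma (u+v) ≠ 0 :=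
    Complex.Gamma_ne_zero_of_re_pos (by rw [Complex.add_re]; linarith)
  rw [mul_comm (Complex.Gamma (u+v)), mul_div_assoc, div_self hne, mul_one]

lemma rpow_m_half {y : ℝ} (hy : 0 < y) (m : ℕ) :
    y ^ ((m:ℝ) - 1/2) = y^m * (Real.sqrt y)⁻¹ := by
  rw [show (m:ℝ) - 1/2 = (m:ℝ) + (-(1/2)) by ring, Real.rpow_add hy, Real.rpow_natCast,
    Real.rpow_neg hy.le, ← Real.sqrt_eq_rpow]

lemma hasSum_key {z : ℂ} (hz : 0 < z.re) (m : ℕ) :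
    HasSum (fun ℓ : ℕ => (Ecoeff ℓ : ℂ) * complexBeta (z + ℓ) ((m:ℂ)+1))
      (complexBeta z ((m:ℂ) + 1/2)) := by
  have hrem : (0:ℝ) < ((m:ℂ)+1).re := by
    simp only [Complex.add_re, Complex.natCast_re, Complex.one_re]
    positivity
  have hreh : (0:ℝ) < ((m:ℂ)+1/2).re := by
    have : ((m:ℂ)+1/2).re = (m:ℝ) + 1/2 := by
      simp [Complex.add_re, Complex.natCast_re, Complex.div_re]
    rw [this]
    positivity
  have hrezl : ∀ ℓ : ℕ, 0 < (z + ℓ).re := fun ℓ => by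
    simp only [Complex.add_re, Complex.natCast_re]
    have : (0:ℝ) ≤ ℓ := Nat.cast_nonneg ℓ
    linarith
  set μ : Measure ℝ := volume.restrict (Ioc (0:ℝ) 1) with hμ
  set F : ℕ → ℝ → ℂ :=
    fun ℓ x => (Ecoeff ℓ : ℂ) * ((x:ℂ)^(z + ℓ - 1) * (1 - (x:ℂ))^m) with hF
  set f : ℝ → ℂ := fun x => (x:ℂ)^(z-1) * (1 - (x:ℂ))^(((m:ℂ)+1/2)-1) with hf
  -- integrability of each term
  have hFint : ∀ ℓ : ℕ, Integrable (F ℓ) μ := by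
    intro ℓ
    have h1 := Complex.betaIntegral_convergent (hrezl ℓ) hrem
    rw [intervalIntegrable_iff, Set.uIoc_of_le zero_le_one] at h1
    have h2 : IntegrableOn (fun x : ℝ => (x:ℂ)^(z + ℓ - 1) * (1 - (x:ℂ))^m)
        (Ioc (0:ℝ) 1) volume := by
      apply h1.congr_fun _ measurableSet_Ioc
      intro x _
      simp [add_sub_cancel_right, Complex.cpow_natCast]
    exact (h2.const_mul _)
  -- a.e. membership in Ioo
  have hae : ∀ᵐ x ∂μ, x ∈ Ioo (0:ℝ) 1 := by
    have h1 : ∀ᵐ x ∂μ, x ∈ Ioc (0:ℝ) 1 := ae_restrict_mem measurableSet_Ioc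
    have h2 : ∀ᵐ x ∂(volume : Measure ℝ), x ≠ 1 := by
      rw [ae_iff]
      have hset : {x : ℝ | ¬ x ≠ 1} = {1} := by ext x; simp
      rw [hset]
      exact measure_singleton 1
    filter_upwards [h1, ae_restrict_of_ae h2] with x hx hx1
    exact ⟨hx.1, lt_of_le_of_ne hx.2 hx1⟩
  -- the bound
  set bound : ℕ → ℝ → ℝ :=
    fun ℓ x => x^(z.re-1) * (1-x)^m * (Ecoeff ℓ * x^ℓ) with hbound
  have key := MeasureTheory.hasSum_integral_of_dominated_convergence (μ := μ)
    (F := F) (f := f) bound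
    (fun ℓ => (hFint ℓ).aestronglyMeasurable) ?_ ?_ ?_ ?_
  · -- translate the conclusion
    have hIoc : ∀ g : ℝ → ℂ, (∫ x, g x ∂μ) = ∫ x in (0:ℝ)..1, g x := fun g =>
      (intervalIntegral.integral_of_le zero_le_one).symm
    have e1 : ∀ ℓ : ℕ, (∫ x, F ℓ x ∂μ)
        = (Ecoeff ℓ : ℂ) * complexBeta (z + ℓ) ((m:ℂ)+1) := by
      intro ℓ
      rw [hIoc, complexBeta_eq_betaIntegral (hrezl ℓ) hrem, Complex.betaIntegral]
      rw [← intervalIntegral.integral_const_mul]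
      apply intervalIntegral.integral_congr
      intro x _
      simp [add_sub_cancel_right, Complex.cpow_natCast]
      rfl
    have e2 : (∫ x, f x ∂μ) = complexBeta z ((m:ℂ)+1/2) := by
      rw [hIoc, complexBeta_eq_betaIntegral hz hreh, Complex.betaIntegral]
    rw [← e2]
    have := key
    simp_rw [e1] at this
    exact this
  · -- h_bound
    intro ℓ
    filter_upwards [hae] with x hx
    have hx0 : (0:ℝ) < x := hx.1
    have hx1 : x < 1 := hx.2
    simp only [hF, hbound, norm_mul]
    rw [Complex.norm_real, Real.norm_eq_abs, _root_.abs_of_nonneg (Ecoeff_pos ℓ).le]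
    have hre : (z + (ℓ:ℂ) - 1).re = z.re + (ℓ:ℝ) - 1 := by simp
    have hc1 : ‖(x:ℂ)^(z + ℓ - 1)‖ = x^(z.re + (ℓ:ℝ) - 1) := by
      rw [Complex.norm_cpow_eq_rpow_re_of_pos hx0, hre]
    have hc2 : ‖(1 - (x:ℂ))^m‖ = (1-x)^m := by
      have he : (1 - (x:ℂ)) = ((1-x : ℝ) : ℂ) := by push_cast; ring
      rw [he, ← Complex.ofReal_pow, Complex.norm_real, Real.norm_eq_abs,
        _root_.abs_of_nonneg (pow_nonneg (by linarith) m)]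
    rw [hc1, hc2]
    have hsplit : x^(z.re + (ℓ:ℝ) - 1) = x^(z.re - 1) * x^ℓ := by
      rw [show z.re + (ℓ:ℝ) - 1 = (z.re - 1) + (ℓ:ℝ) by ring, Real.rpow_add hx0,
        Real.rpow_natCast]
    rw [hsplit]
    ring_nf
    exact le_refl _
  · -- bound summable
    filter_upwards [hae] with x hx
    exact ((hasSum_Ecoeff_mul hx.1.le hx.2).mul_left _).summable
  · -- bound integrable
    have hnorm : Integrable (fun x => ‖f x‖) μ := by
      have h1 := (Complex.betaIntegral_convergent hz hreh).norm
      rw [intervalIntegrable_iff, Set.uIoc_of_le zero_le_one] at h1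
      exact h1
    apply hnorm.congr
    filter_upwards [hae] with x hx
    have hx0 : (0:ℝ) < x := hx.1
    have hx1 : x < 1 := hx.2
    have h1x : (0:ℝ) < 1 - x := by linarith
    have htsum : ∑' ℓ, bound ℓ x
        = x^(z.re-1) * (1-x)^m * (Real.sqrt (1-x))⁻¹ :=
      ((hasSum_Ecoeff_mul hx0.le hx1).mul_left _).tsum_eq
    rw [hf]
    have hre1 : (z - 1).re = z.re - 1 := by simp
    have hn1 : ‖(x:ℂ)^(z-1)‖ = x^(z.re-1) := by
      rw [Complex.norm_cpow_eq_rpow_re_of_pos hx0, hre1]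
    have hre2 : (((m:ℂ)+1/2)-1).re = (m:ℝ) - 1/2 := by
      simp [Complex.add_re, Complex.sub_re, Complex.div_re]
      ring
    have hn2 : ‖(1 - (x:ℂ))^(((m:ℂ)+1/2)-1)‖ = (1-x)^((m:ℝ)-1/2) := by
      have he : (1 - (x:ℂ)) = ((1-x : ℝ) : ℂ) := by push_cast; ring
      rw [he, Complex.norm_cpow_eq_rpow_re_of_pos h1x, hre2]
    show ‖(x:ℂ)^(z-1) * (1 - (x:ℂ))^(((m:ℂ)+1/2)-1)‖ = ∑' ℓ, bound ℓ x
    rw [norm_mul, hn1, hn2, htsum, rpow_m_half h1x m]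
    ring
  · -- h_lim
    filter_upwards [hae] with x hx
    have hx0 : (0:ℝ) < x := hx.1
    have hx1 : x < 1 := hx.2
    have h1x : (0:ℝ) < 1 - x := by linarith
    have hs := hasSum_Ecoeff_mul hx0.le hx1
    have hsC : HasSum (fun ℓ : ℕ => ((Ecoeff ℓ * x^ℓ : ℝ) : ℂ))
        (((Real.sqrt (1-x))⁻¹ : ℝ) : ℂ) := hasSum_ofReal.2 hs
    have hsC2 := hsC.mul_left ((x:ℂ)^(z-1) * (1 - (x:ℂ))^m)
    have heF : ∀ ℓ : ℕ, F ℓ x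
        = ((x:ℂ)^(z-1) * (1 - (x:ℂ))^m) * ((Ecoeff ℓ * x^ℓ : ℝ) : ℂ) := by
      intro ℓ
      simp only [hF]
      have hxne : (x:ℂ) ≠ 0 := by exact_mod_cast hx0.ne'
      rw [show z + ℓ - 1 = (z-1) + (ℓ:ℂ) by ring, Complex.cpow_add _ _ hxne,
        Complex.cpow_natCast]
      push_cast
      ring
    have hef : f x = ((x:ℂ)^(z-1) * (1 - (x:ℂ))^m) * (((Real.sqrt (1-x))⁻¹ : ℝ) : ℂ) := by
      simp only [hf]
      have he : (1 - (x:ℂ)) = ((1-x : ℝ) : ℂ) := by push_cast; ring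
      have hcast : ((m:ℂ)+1/2)-1 = (((m:ℝ)-1/2 : ℝ) : ℂ) := by push_cast; ring
      rw [hcast, he, ← Complex.ofReal_cpow h1x.le, rpow_m_half h1x m]
      push_cast
      ring
    simp_rw [heF, hef]
    exact hsC2

lemma norm_summable {z : ℂ} (hz : 0 ≤ z.re) (m : ℕ) :
    Summable (fun ℓ : ℕ => ‖(Ecoeff ℓ : ℂ) * complexBeta (z + ℓ) ((m:ℂ)+1)‖) := by
  rw [← summable_nat_add_iff 1]
  apply Summable.of_nonneg_of_le (fun ℓ => norm_nonneg _)
    (fun ℓ => term_bound hz (Nat.le_add_left 1 ℓ) m)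
  apply Summable.mul_left
  have h1 : Summable (fun n : ℕ => (((n:ℝ)) ^ ((3:ℝ)/2))⁻¹) :=
    Real.summable_nat_rpow_inv.2 (by norm_num)
  exact (summable_nat_add_iff 1).2 h1

-- continuity of Beta in first variable
lemma contBeta {w v : ℂ} (hw1 : ∀ n : ℕ, w ≠ -n) (hwv : 0 < (w + v).re) :
    ContinuousAt (fun u => complexBeta u v) w := by
  unfold complexBeta
  have h1 : ContinuousAt Complex.Gamma w :=
    (Complex.differentiableAt_Gamma w hw1).continuousAt
  have h2 : ContinuousAt (fun u : ℂ => Complex.Gamma (u + v)) w := by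
    have hd : ContinuousAt Complex.Gamma (w + v) :=
      (Complex.differentiableAt_Gamma _ (fun n => by
        intro hc
        have : (w+v).re = -(n:ℝ) := by rw [hc]; simp
        have hn : (0:ℝ) ≤ (n:ℝ) := Nat.cast_nonneg n
        linarith)).continuousAt
    have hadd : ContinuousAt (fun u : ℂ => u + v) w := by fun_prop
    exact ContinuousAt.comp (x := w) hd hadd
  exact ((h1.mul continuousAt_const).div h2 (Complex.Gamma_ne_zero_of_re_pos hwv))

theorem beta_half_integer_series (z : ℂ) (hz : 0 ≤ z.re) (hz0 : z ≠ 0) (m : ℕ) :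
    Summable (fun ℓ : ℕ => ‖(Ecoeff ℓ : ℂ) * complexBeta (z + ℓ) (m + 1)‖) ∧
    complexBeta z (m + 1/2) = ∑' ℓ : ℕ, (Ecoeff ℓ : ℂ) * complexBeta (z + ℓ) (m + 1) := by
  refine ⟨norm_summable hz m, ?_⟩
  rcases lt_or_eq_of_le hz with hpos | hzero
  · exact (hasSum_key hpos m).tsum_eq.symm
  · -- boundary case : z.re = 0, z.im ≠ 0
    have hre0 : z.re = 0 := hzero.symm
    have him : z.im ≠ 0 := by
      intro h
      exact hz0 (Complex.ext hre0 h)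
    have hnotneg : ∀ n : ℕ, z ≠ -n := fun n hc => him (by rw [hc]; simp)
    have hnotnegl : ∀ ℓ : ℕ, ∀ n : ℕ, z + (ℓ:ℂ) ≠ -n := by
      intro ℓ n hc
      apply him
      have := congrArg Complex.im hc
      simpa using this
    set c : ℝ := |z.im| with hc
    have hcpos : 0 < c := abs_pos.2 him
    set g : ℕ → ℂ := fun ℓ => (Ecoeff ℓ : ℂ) * complexBeta (z + ℓ) ((m:ℂ)+1) with hg
    set fn : ℝ → ℕ → ℂ :=
      fun t ℓ => (Ecoeff ℓ : ℂ) * complexBeta ((z + t) + ℓ) ((m:ℂ)+1) with hfn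
    set bound : ℕ → ℝ := fun ℓ =>
      if ℓ = 0 then (Nat.factorial m : ℝ) / c^(m+1)
      else (Nat.factorial m : ℝ) * (((ℓ:ℝ) ^ ((3:ℝ)/2))⁻¹) with hbound
    have hsum_bound : Summable bound := by
      rw [← summable_nat_add_iff 1]
      have : (fun ℓ : ℕ => bound (ℓ+1))
          = fun ℓ : ℕ => (Nat.factorial m : ℝ) * ((((ℓ+1:ℕ):ℝ)) ^ ((3:ℝ)/2))⁻¹ := by
        funext ℓ
        rw [hbound]
        simp
      rw [this]
      apply Summable.mul_left
      exact (summable_nat_add_iff 1).2 (Real.summable_nat_rpow_inv.2 (by norm_num))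
    have h_tend : ∀ ℓ : ℕ, Tendsto (fun t : ℝ => fn t ℓ) (nhdsWithin 0 (Ioi 0)) (nhds (g ℓ)) := by
      intro ℓ
      have hco : ContinuousAt (fun u : ℂ => complexBeta (u + ℓ) ((m:ℂ)+1)) z := by
        have h1 : ContinuousAt (fun u : ℂ => complexBeta u ((m:ℂ)+1)) (z + ℓ) := by
          apply contBeta (hnotnegl ℓ)
          have : (z + (ℓ:ℂ) + ((m:ℂ)+1)).re = (ℓ:ℝ) + (m:ℝ) + 1 := by
            simp [Complex.add_re, hre0]
            ring
          rw [this]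
          positivity
        have hadd : ContinuousAt (fun u : ℂ => u + (ℓ:ℂ)) z := by fun_prop
        exact ContinuousAt.comp (x := z) h1 hadd
      have h2 : Tendsto (fun t : ℝ => z + (t:ℂ)) (nhdsWithin 0 (Ioi 0)) (nhds z) := by
        have h3 : Tendsto (fun t : ℝ => z + (t:ℂ)) (nhds 0) (nhds (z + 0)) :=
          (continuous_const.add Complex.continuous_ofReal).continuousAt
        rw [add_zero] at h3
        exact h3.mono_left nhdsWithin_le_nhds
      exact ((hco.tendsto.comp h2).const_mul _)
    have h_bound : ∀ᶠ t in (nhdsWithin (0:ℝ) (Ioi 0)), ∀ ℓ, ‖fn t ℓ‖ ≤ bound ℓ := by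
      apply Filter.eventually_of_mem self_mem_nhdsWithin
      intro t ht ℓ
      have htpos : (0:ℝ) < t := ht
      have hret : (z + (t:ℂ)).re = t := by simp [Complex.add_re, hre0]
      match ℓ with
      | 0 =>
        rw [hfn, hbound]
        simp only [Nat.cast_zero, add_zero, if_pos rfl]
        have hG : Complex.Gamma (z + (t:ℂ)) ≠ 0 :=
          Complex.Gamma_ne_zero_of_re_pos (by rw [hret]; exact htpos)
        have hb := norm_complexBeta_le (u := z + (t:ℂ)) (m := m) hcpos hG ?_
        · calc ‖(Ecoeff 0 : ℂ) * complexBeta (z + (t:ℂ)) ((m:ℂ)+1)‖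
              = ‖complexBeta (z + (t:ℂ)) ((m:ℂ)+1)‖ := by
                rw [norm_mul, Ecoeff_zero]
                simp
            _ ≤ (Nat.factorial m : ℝ) / c^(m+1) := hb
        · intro j hj
          calc c = |z.im| := rfl
            _ = |(z + (t:ℂ) + (j:ℂ)).im| := by simp
            _ ≤ ‖z + (t:ℂ) + (j:ℂ)‖ := Complex.abs_im_le_norm _
      | (ℓ+1) =>
        rw [hfn, hbound]
        simp only [if_neg (Nat.succ_ne_zero ℓ)]
        exact term_bound (w := z + (t:ℂ)) (by rw [hret]; exact htpos.le)
          (Nat.le_add_left 1 ℓ) m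
    have h_tsum := tendsto_tsum_of_dominated_convergence hsum_bound h_tend h_bound
    have h_lhs : Tendsto (fun t : ℝ => complexBeta (z + t) ((m:ℂ)+1/2))
        (nhdsWithin 0 (Ioi 0)) (nhds (complexBeta z ((m:ℂ)+1/2))) := by
      have hco : ContinuousAt (fun u : ℂ => complexBeta u ((m:ℂ)+1/2)) z := by
        apply contBeta hnotneg
        have : (z + ((m:ℂ)+1/2)).re = (m:ℝ) + 1/2 := by
          simp [Complex.add_re, hre0, Complex.div_re]
        rw [this]
        positivity
      have h2 : Tendsto (fun t : ℝ => z + (t:ℂ)) (nhdsWithin 0 (Ioi 0)) (nhds z) := by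
        have h3 : Tendsto (fun t : ℝ => z + (t:ℂ)) (nhds 0) (nhds (z + 0)) :=
          (continuous_const.add Complex.continuous_ofReal).continuousAt
        rw [add_zero] at h3
        exact h3.mono_left nhdsWithin_le_nhds
      exact hco.tendsto.comp h2
    have heq : ∀ᶠ (t : ℝ) in (nhdsWithin (0:ℝ) (Ioi 0)),
        complexBeta (z + (t:ℂ)) ((m:ℂ)+1/2) = ∑' ℓ, fn t ℓ := by
      apply Filter.eventually_of_mem self_mem_nhdsWithin
      intro t ht
      have htpos : (0:ℝ) < t := ht
      have hret : (0:ℝ) < (z + (t:ℂ)).re := by simp [Complex.add_re, hre0]; exact htpos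
      have hk := hasSum_key hret m
      have : (fun ℓ : ℕ => (Ecoeff ℓ : ℂ) * complexBeta ((z + (t:ℂ)) + ℓ) ((m:ℂ)+1))
          = fn t := by funext ℓ; rw [hfn]
      rw [this] at hk
      exact hk.tsum_eq.symm
    have h_lhs' : Tendsto (fun t : ℝ => ∑' ℓ, fn t ℓ) (nhdsWithin 0 (Ioi 0))
        (nhds (complexBeta z ((m:ℂ)+1/2))) := by
      exact Filter.Tendsto.congr' heq h_lhs
    exact tendsto_nhds_unique h_lhs' h_tsum
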